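/- arXiv:2103.15139 — 2 statements merged into one kernel-verified Lean document; each statement's English description precedes it below -/
import Mathlib

section
/- Let P be a poset. If the space (P, σ(P)) is first-countable, then on the complete lattice Γ(P) of Scott closed subsets of P the Scott topology coincides with the lower Vietoris topology: σ(Γ(P)) = υ(Γ(P)). -/
open Topology TopologicalSpace Set

/-- The lower Vietoris topology on the lattice of closed subsets of a topological space,
generated by the subbasis of sets `◊U = {A closed | A ∩ U ≠ ∅}` for `U` open. -/
def lowerVietoris (X : Type*) [TopologicalSpace X] :
    TopologicalSpace (TopologicalSpace.Closeds X) :=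
  TopologicalSpace.generateFrom
    {S | ∃ U : Set X, IsOpen U ∧ S = {A : TopologicalSpace.Closeds X | ((A : Set X) ∩ U).Nonempty}}

/-! ### Order-theoretic closure machinery -/

section OrdCl

variable {α : Type*} [Preorder α]

/-- Order-theoretic "Scott closed": a lower set closed under directed suprema. -/
def OrdClosed (C : Set α) : Prop := IsLowerSet C ∧ DirSupClosed C

/-- Order-theoretic Scott closure. -/
def ordCl (S : Set α) : Set α := ⋂₀ {C | OrdClosed C ∧ S ⊆ C}

lemma subset_ordCl {S : Set α} : S ⊆ ordCl S := fun x hx C hC => hC.2 hx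

lemma ordCl_subset {S C : Set α} (hC : OrdClosed C) (h : S ⊆ C) : ordCl S ⊆ C :=
  fun _ hx => hx C ⟨hC, h⟩

lemma ordClosed_ordCl {S : Set α} : OrdClosed (ordCl S) := by
  constructor
  · intro v w hle hv C hC
    exact hC.1.1 hle (hv C hC)
  · intro d hsub hne hdir a ha C hC
    exact hC.1.2 (fun p hp => hsub hp C hC) hne hdir ha

lemma mem_ordCl {S : Set α} {x : α} :
    x ∈ ordCl S ↔ ∀ C : Set α, OrdClosed C → S ⊆ C → x ∈ C := by
  simp [ordCl, OrdClosed, mem_sInter, and_imp]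

end OrdCl

section Pairs

variable {α β : Type*} [Preorder α] [Preorder β]

lemma directedOn_image_mono {f : α → β} (hf : Monotone f) {d : Set α}
    (hd : DirectedOn (· ≤ ·) d) : DirectedOn (· ≤ ·) (f '' d) := by
  rintro _ ⟨p, hp, rfl⟩ _ ⟨q, hq, rfl⟩
  obtain ⟨r, hr, h1, h2⟩ := hd p hp q hq
  exact ⟨f r, ⟨r, hr, rfl⟩, hf h1, hf h2⟩

lemma isLUB_image_pair_right (v : α) {d : Set β} {s : β} (hne : d.Nonempty) (h : IsLUB d s) :
    IsLUB ((fun w => (v, w)) '' d) (v, s) := by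
  constructor
  · rintro _ ⟨w, hw, rfl⟩
    exact ⟨le_rfl, h.1 hw⟩
  · intro c hc
    obtain ⟨w₀, hw₀⟩ := hne
    refine ⟨(hc ⟨w₀, hw₀, rfl⟩).1, h.2 fun w hw => (hc ⟨w, hw, rfl⟩).2⟩

lemma isLUB_image_pair_left (y : β) {d : Set α} {s : α} (hne : d.Nonempty) (h : IsLUB d s) :
    IsLUB ((fun p => (p, y)) '' d) (s, y) := by
  constructor
  · rintro _ ⟨w, hw, rfl⟩
    exact ⟨h.1 hw, le_rfl⟩
  · intro c hc
    obtain ⟨w₀, hw₀⟩ := hne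
    refine ⟨h.2 fun w hw => (hc ⟨w, hw, rfl⟩).1, (hc ⟨w₀, hw₀, rfl⟩).2⟩

/-- Vertical sections of a lower, directed-sup-closed relation are `OrdClosed`. -/
lemma ordClosed_section_right {R : Set (α × β)} (hlow : IsLowerSet R) (hdsc : DirSupClosed R)
    (v : α) : OrdClosed {w : β | (v, w) ∈ R} := by
  constructor
  · intro w' w hle hw
    exact hlow (Prod.mk_le_mk.2 ⟨le_rfl, hle⟩) hw
  · intro d hsub hne hdir a ha
    exact hdsc (by rintro _ ⟨w, hw, rfl⟩; exact hsub hw) (hne.image _) (directedOn_image_mono (fun _ _ h => Prod.mk_le_mk.2 ⟨le_rfl, h⟩) hdir)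
      (isLUB_image_pair_right v hne ha)

lemma ordClosed_section_left {R : Set (α × β)} (hlow : IsLowerSet R) (hdsc : DirSupClosed R)
    (y : β) : OrdClosed {p : α | (p, y) ∈ R} := by
  constructor
  · intro w' w hle hw
    exact hlow (Prod.mk_le_mk.2 ⟨hle, le_rfl⟩) hw
  · intro d hsub hne hdir a ha
    exact hdsc (by rintro _ ⟨w, hw, rfl⟩; exact hsub hw) (hne.image _) (directedOn_image_mono (fun _ _ h => Prod.mk_le_mk.2 ⟨h, le_rfl⟩) hdir)
      (isLUB_image_pair_left y hne ha)

/-- **Key lemma.** If `R` is a lower, directed-sup-closed relation containing all pairs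
`(a k, b k)`, `y` lies in the order closure of every infinite subfamily of the `b`'s, and `u`
lies in the order closure of every infinite subfamily of the `a`'s, then `(u, y) ∈ R`. -/
lemma lemmaX (R : Set (α × β)) (hlow : IsLowerSet R) (hdsc : DirSupClosed R)
    (a : ℕ → α) (b : ℕ → β) (hab : ∀ k, (a k, b k) ∈ R)
    (y : β) (hy : ∀ K : Set ℕ, K.Infinite → y ∈ ordCl (b '' K))
    (u : α) (hu : ∀ K : Set ℕ, K.Infinite → u ∈ ordCl (a '' K)) :
    (u, y) ∈ R := by
  -- if `v` is below infinitely many `a k`, then `(v, y) ∈ R`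
  have hstep : ∀ v : α, {k : ℕ | v ≤ a k}.Infinite → (v, y) ∈ R := by
    intro v hv
    have hsub : b '' {k : ℕ | v ≤ a k} ⊆ {w : β | (v, w) ∈ R} := by
      rintro _ ⟨k, hk, rfl⟩
      exact hlow (Prod.mk_le_mk.2 ⟨hk, le_rfl⟩) (hab k)
    exact ordCl_subset (ordClosed_section_right hlow hdsc v) hsub (hy _ hv)
  -- the key dichotomy, for each infinite index set K
  have key : ∀ K : Set ℕ, K.Infinite → ∀ v, v ∈ ordCl (a '' K) →
      (v, y) ∈ R ∨ ∃ k ∈ K, v ≤ a k := by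
    intro K hK
    suffices h : ordCl (a '' K) ⊆ {v : α | (v, y) ∈ R ∨ ∃ k ∈ K, v ≤ a k} from fun v hv => h hv
    apply ordCl_subset
    · constructor
      · intro v' v hle hv
        rcases hv with hv | ⟨k, hk, hk'⟩
        · exact Or.inl (hlow (Prod.mk_le_mk.2 ⟨hle, le_rfl⟩) hv)
        · exact Or.inr ⟨k, hk, hle.trans hk'⟩
      · intro d hsub hne hdir s hlub
        by_cases hcof : ∀ p ∈ d, ∃ q ∈ d, p ≤ q ∧ (q, y) ∈ R
        · -- the set of elements related to y is cofinal in d; s is its LUB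
          left
          set d₁ := {p ∈ d | (p, y) ∈ R} with hd₁
          have hne₁ : d₁.Nonempty := by
            obtain ⟨p, hp⟩ := hne
            obtain ⟨q, hq, _, hqy⟩ := hcof p hp
            exact ⟨q, hq, hqy⟩
          have hdir₁ : DirectedOn (· ≤ ·) d₁ := by
            rintro p ⟨hp, _⟩ q ⟨hq, _⟩
            obtain ⟨r, hr, h1, h2⟩ := hdir p hp q hq
            obtain ⟨r', hr', hrr', hr'y⟩ := hcof r hr
            exact ⟨r', ⟨hr', hr'y⟩, h1.trans hrr', h2.trans hrr'⟩
          have hlub₁ : IsLUB d₁ s := by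
            constructor
            · exact fun p hp => hlub.1 hp.1
            · intro w hw
              refine hlub.2 fun p hp => ?_
              obtain ⟨q, hq, hpq, hqy⟩ := hcof p hp
              exact hpq.trans (hw ⟨hq, hqy⟩)
          have : s ∈ {p : α | (p, y) ∈ R} :=
            (ordClosed_section_left hlow hdsc y).2 (fun p hp => hp.2) hne₁ hdir₁ hlub₁
          exact this
        · -- otherwise all elements above some d₀ are not related to y
          push_neg at hcof
          obtain ⟨d₀, hd₀, hno⟩ := hcof
          -- the index sets K_q for q ≥ d₀ are finite nonempty subsets of K_{d₀}
          have hKq : ∀ q ∈ d, d₀ ≤ q → ∃ k ∈ K, q ≤ a k := by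
            intro q hq hq0
            rcases hsub hq with h | h
            · exact absurd h (hno q hq hq0)
            · exact h
          have hK0fin : {k ∈ K | d₀ ≤ a k}.Finite := by
            by_contra hinf
            have hinf' : {k ∈ K | d₀ ≤ a k}.Infinite := hinf
            have : {k : ℕ | d₀ ≤ a k}.Infinite :=
              hinf'.mono fun k hk => hk.2
            exact hno d₀ hd₀ le_rfl (hstep d₀ this)
          -- choose a minimal index set
          set D'' := {q ∈ d | d₀ ≤ q} with hD''
          have hD''ne : D''.Nonempty := ⟨d₀, hd₀, le_rfl⟩
          set KF : α → Set ℕ := fun q => {k ∈ K | q ≤ a k} with hKF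
          have hKmono : ∀ p q, p ≤ q → KF q ⊆ KF p := by
            intro p q hpq k hk
            exact ⟨hk.1, hpq.trans hk.2⟩
          have hfam : ((fun q => KF q) '' D'').Finite := by
            apply Set.Finite.subset hK0fin.finite_subsets
            rintro _ ⟨q, hq, rfl⟩
            exact hKmono _ _ hq.2
          obtain ⟨_, ⟨q₁, hq₁, rfl⟩, hmin⟩ :=
            Set.Finite.exists_minimalFor id _ hfam ⟨KF d₀, ⟨d₀, ⟨hd₀, le_rfl⟩, rfl⟩⟩
          -- KF q₁ is nonempty
          obtain ⟨k₀, hk₀⟩ : (KF q₁).Nonempty := by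
            obtain ⟨k, hk, hk'⟩ := hKq q₁ hq₁.1 hq₁.2
            exact ⟨k, hk, hk'⟩
          -- every q in d is below a k₀
          have hub : ∀ q ∈ d, q ≤ a k₀ := by
            intro q hq
            obtain ⟨r, hr, hqr, hq₁r⟩ := hdir q hq q₁ hq₁.1
            have hrD : r ∈ D'' := ⟨hr, hq₁.2.trans hq₁r⟩
            have h1 : KF r ⊆ KF q₁ := hKmono _ _ hq₁r
            have h2 : KF q₁ = KF r := le_antisymm (hmin ⟨r, hrD, rfl⟩ h1) h1
            have : k₀ ∈ KF r := h2 ▸ hk₀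
            exact hqr.trans this.2
          exact Or.inr ⟨k₀, hk₀.1, hlub.2 hub⟩
    · rintro _ ⟨k, hk, rfl⟩
      exact Or.inr ⟨k, hk, le_rfl⟩
  -- conclude
  by_cases hfin : {k : ℕ | ¬ u ≤ a k}.Infinite
  · rcases key _ hfin u (hu _ hfin) with h | ⟨k, hk, hle⟩
    · exact h
    · exact absurd hle hk
  · rw [Set.not_infinite] at hfin
    have hcompl : ({k : ℕ | ¬ u ≤ a k})ᶜ = {k : ℕ | u ≤ a k} := by
      ext k; simp
    have : {k : ℕ | u ≤ a k}.Infinite := by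
      rw [← hcompl]
      exact hfin.infinite_compl
    exact hstep u this

end Pairs

/-! ### Scott space facts -/

section ScottSpace

variable {P : Type*} [PartialOrder P] [TopologicalSpace P] [Topology.IsScott P Set.univ]

lemma ordClosed_of_isClosed {C : Set P} (h : IsClosed C) : OrdClosed C := by
  obtain ⟨h1, h2⟩ := Topology.IsScott.isClosed_iff_isLowerSet_and_dirSupClosed.mp h
  exact ⟨h1, h2⟩

lemma isClosed_of_ordClosed {C : Set P} (h : OrdClosed C) : IsClosed C :=
  Topology.IsScott.isClosed_iff_isLowerSet_and_dirSupClosed.mpr ⟨h.1, h.2⟩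

lemma closure_subset_ordCl (S : Set P) : closure S ⊆ ordCl S :=
  closure_minimal subset_ordCl (isClosed_of_ordClosed ordClosed_ordCl)

/-- The principal down-set as a closed set of a Scott space. -/
def dpt (x : P) : Closeds P := ⟨Set.Iic x, isClosed_Iic⟩

lemma mem_dpt {x y : P} : y ∈ dpt x ↔ y ≤ x := Iff.rfl

lemma dpt_le_iff {x : P} {C : Closeds P} : dpt x ≤ C ↔ x ∈ C := by
  constructor
  · intro h
    exact h (le_refl x)
  · intro h z hz
    exact (Topology.IsScott.isLowerSet_of_isClosed C.isClosed) hz h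

lemma dpt_mono : Monotone (dpt : P → Closeds P) := by
  intro x y h
  exact dpt_le_iff.2 (mem_dpt.2 h)

end ScottSpace

/-! ### Generalities on `Closeds` as a lattice -/

section ClosedsLattice

variable {P : Type*} [PartialOrder P] [TopologicalSpace P] [Topology.IsScott P Set.univ]

lemma sup_univ_fin_succ {n : ℕ} {γ : Type*} [SemilatticeSup γ] [OrderBot γ]
    (f : Fin (n + 1) → γ) :
    Finset.univ.sup f = f 0 ⊔ Finset.univ.sup (fun i : Fin n => f i.succ) := by
  rw [Fin.univ_succ, Finset.sup_cons, Finset.sup_map]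
  rfl

/-- The down-closure of finitely many points, as an element of `Closeds`. -/
noncomputable def dfin {n : ℕ} (x : Fin n → P) : Closeds P :=
  Finset.univ.sup (fun i => dpt (x i))

lemma dfin_succ {n : ℕ} (x : Fin (n + 1) → P) :
    dfin x = dpt (x 0) ⊔ dfin (fun i : Fin n => x i.succ) :=
  sup_univ_fin_succ _

/-- The main inductive lemma: a Scott-closed collection of closed sets which contains the
finitely-generated closed sets `dfin (e k)` also contains `dfin x` whenever each coordinate
`x i` is in the order closure of every infinite subfamily of `(e k i)`. -/
lemma TnLemma : ∀ (n : ℕ) (𝒞 : Set (Closeds P)), IsLowerSet 𝒞 → DirSupClosed 𝒞 →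
    ∀ (x : Fin n → P) (e : ℕ → Fin n → P),
    (∀ (i : Fin n) (K : Set ℕ), K.Infinite → x i ∈ ordCl ((fun k => e k i) '' K)) →
    (∀ k, dfin (e k) ∈ 𝒞) → dfin x ∈ 𝒞 := by
  intro n
  induction n with
  | zero =>
    intro 𝒞 h1 h2 x e hrob hmem
    have h0 := hmem 0
    have : dfin (e 0) = dfin x := by
      unfold dfin
      simp
    rwa [this] at h0
  | succ n IH =>
    intro 𝒞 h1 h2 x e hrob hmem
    -- the relation R on (Closeds P) × P
    set R : Set (Closeds P × P) := {q | q.1 ⊔ dpt q.2 ∈ 𝒞} with hR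
    have hRlow : IsLowerSet R := by
      intro q' q hle hq
      exact h1 (sup_le_sup (Prod.le_def.1 hle).1 (dpt_mono (Prod.le_def.1 hle).2)) hq
    have hRdsc : DirSupClosed R := by
      intro d hsub hne hdir p hlub
      have hE : ((fun q : Closeds P × P => q.1 ⊔ dpt q.2) '' d) ⊆ 𝒞 := by
        rintro _ ⟨q, hq, rfl⟩
        exact hsub hq
      refine h2 hE (hne.image _)
        (directedOn_image_mono (fun q q' h => sup_le_sup (Prod.le_def.1 h).1 (dpt_mono (Prod.le_def.1 h).2)) hdir) ?_
      -- IsLUB of the image is p.1 ⊔ dpt p.2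
      constructor
      · rintro _ ⟨q, hq, rfl⟩
        have := Prod.le_def.1 (hlub.1 hq)
        exact sup_le_sup this.1 (dpt_mono this.2)
      · intro W hW
        have hp1 : p.1 ≤ W := by
          have : p ≤ (W, p.2) := by
            refine hlub.2 fun q hq => Prod.le_def.2 ⟨?_, (Prod.le_def.1 (hlub.1 hq)).2⟩
            exact le_trans le_sup_left (hW ⟨q, hq, rfl⟩)
          exact (Prod.le_def.1 this).1
        have hp2 : dpt p.2 ≤ W := by
          rw [dpt_le_iff]
          -- use that the carrier of W is OrdClosed
          have hW' : OrdClosed (W : Set P) := ordClosed_of_isClosed W.isClosed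
          have hsnd : (Prod.snd '' d) ⊆ (W : Set P) := by
            rintro _ ⟨q, hq, rfl⟩
            have : dpt q.2 ≤ W := le_trans le_sup_right (hW ⟨q, hq, rfl⟩)
            exact dpt_le_iff.1 this
          have hdir2 : DirectedOn (· ≤ ·) (Prod.snd '' d) :=
            directedOn_image_mono (fun q q' h => (Prod.le_def.1 h).2) hdir
          have hlub2 : IsLUB (Prod.snd '' d) p.2 := by
            constructor
            · rintro _ ⟨q, hq, rfl⟩
              exact (Prod.le_def.1 (hlub.1 hq)).2
            · intro w hw
              have : p ≤ (p.1, w) := by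
                refine hlub.2 fun q hq =>
                  Prod.le_def.2 ⟨(Prod.le_def.1 (hlub.1 hq)).1, hw ⟨q, hq, rfl⟩⟩
              exact (Prod.le_def.1 this).2
          exact hW'.2 hsnd (hne.image _) hdir2 hlub2
        exact sup_le hp1 hp2
    -- the sequences
    set a : ℕ → Closeds P := fun k => dfin (fun i : Fin n => e k i.succ) with ha
    set b : ℕ → P := fun k => e k 0 with hb
    have hab : ∀ k, (a k, b k) ∈ R := by
      intro k
      show dfin (fun i : Fin n => e k i.succ) ⊔ dpt (e k 0) ∈ 𝒞
      have := hmem k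
      rw [dfin_succ] at this
      rwa [sup_comm] at this
    have hy : ∀ K : Set ℕ, K.Infinite → x 0 ∈ ordCl (b '' K) := fun K hK => hrob 0 K hK
    have hu : ∀ K : Set ℕ, K.Infinite →
        dfin (fun i : Fin n => x i.succ) ∈ ordCl (a '' K) := by
      intro K hK
      set g : ℕ → ℕ := fun m => (hK.natEmbedding _ m : ℕ) with hg
      have hgK : ∀ m, g m ∈ K := fun m => (hK.natEmbedding _ m).2
      have hginj : Function.Injective g := fun m m' h => by
        have := (hK.natEmbedding _).injective (Subtype.ext h)
        exact this
      refine IH (ordCl (a '' K)) ordClosed_ordCl.1 ordClosed_ordCl.2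
        (fun i => x i.succ) (fun m i => e (g m) i.succ) ?_ ?_
      · intro i K' hK'
        have himg : (fun m => e (g m) i.succ) '' K' = (fun k => e k i.succ) '' (g '' K') := by
          rw [Set.image_image]
        rw [himg]
        exact hrob i.succ (g '' K') (hK'.image (hginj.injOn))
      · intro m
        exact subset_ordCl ⟨g m, hgK m, rfl⟩
    have := lemmaX R hRlow hRdsc a b hab (x 0) hy _ hu
    show dfin x ∈ 𝒞
    rw [dfin_succ, sup_comm]
    exact this

end ClosedsLattice

/-! ### Main theorem -/

section Main

variable {P : Type*} [PartialOrder P] [TopologicalSpace P] [Topology.IsScott P Set.univ]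

/-- If `S` is the least upper bound of a family in `Closeds`, its carrier is contained in the
closure of the union of the carriers. -/
lemma isLUB_closeds_subset {d : Set (Closeds P)} {S : Closeds P} (h : IsLUB d S) :
    (S : Set P) ⊆ closure (⋃ D ∈ d, (D : Set P)) := by
  have : S ≤ Closeds.closure (⋃ D ∈ d, (D : Set P)) := by
    apply h.2
    intro D hD
    intro p hp
    exact subset_closure (Set.mem_biUnion hD hp)
  exact this

/-- Every Scott-open collection of closed sets contains, around each of its members, a finite
intersection of subbasic lower-Vietoris opens. -/
lemma exists_basic [FirstCountableTopology P] (𝒰 : Set (Closeds P))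
    (hup : IsUpperSet 𝒰) (hinacc : DirSupInacc 𝒰) (A : Closeds P) (hA : A ∈ 𝒰) :
    ∃ (n : ℕ) (V : Fin n → Set P), (∀ i, IsOpen (V i)) ∧
      (∀ i, ((A : Set P) ∩ V i).Nonempty) ∧
      {B : Closeds P | ∀ i, ((B : Set P) ∩ V i).Nonempty} ⊆ 𝒰 := by
  classical
  -- Step 1: find a finite F ⊆ A with (F.sup dpt) ∈ 𝒰
  set 𝒟 : Set (Closeds P) := (fun F : Finset P => F.sup dpt) '' {F | (F : Set P) ⊆ (A : Set P)}
    with h𝒟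
  have h𝒟ne : 𝒟.Nonempty := ⟨(∅ : Finset P).sup dpt, ∅, by simp, rfl⟩
  have h𝒟dir : DirectedOn (· ≤ ·) 𝒟 := by
    rintro _ ⟨F, hF, rfl⟩ _ ⟨G, hG, rfl⟩
    refine ⟨(F ∪ G).sup dpt, ⟨F ∪ G, ?_, rfl⟩,
      Finset.sup_mono Finset.subset_union_left, Finset.sup_mono Finset.subset_union_right⟩
    intro p hp
    rcases Finset.mem_union.1 hp with h | h
    · exact hF h
    · exact hG h
  have h𝒟lub : IsLUB 𝒟 A := by
    constructor
    · rintro _ ⟨F, hF, rfl⟩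
      exact Finset.sup_le fun p hp => dpt_le_iff.2 (hF hp)
    · intro W hW
      intro p hp
      have : ({p} : Finset P).sup dpt ≤ W := hW ⟨{p}, by simpa using hp, rfl⟩
      rw [Finset.sup_singleton] at this
      exact dpt_le_iff.1 this
  obtain ⟨_, ⟨F₀, hF₀A, rfl⟩, hF₀𝒰⟩ := hinacc h𝒟ne h𝒟dir h𝒟lub hA
  -- enumerate F₀
  set n := F₀.card with hn
  set x : Fin n → P := fun i => (F₀.equivFin.symm i : P) with hx
  have hxF₀ : ∀ i, x i ∈ F₀ := fun i => (F₀.equivFin.symm i).2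
  have hdfin : dfin x = F₀.sup dpt := by
    apply le_antisymm
    · exact Finset.sup_le fun i _ => Finset.le_sup (hxF₀ i)
    · refine Finset.sup_le fun p hp => ?_
      have h1 : dpt (x (F₀.equivFin ⟨p, hp⟩)) ≤ dfin x :=
        Finset.le_sup (f := fun i => dpt (x i)) (Finset.mem_univ (F₀.equivFin ⟨p, hp⟩))
      have h2 : x (F₀.equivFin ⟨p, hp⟩) = p := by
        simp [hx]
      rwa [h2] at h1
  -- Step 2: suppose no finite intersection of diamonds works
  by_contra hcon
  push_neg at hcon
  -- get countable antitone neighborhood bases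
  have hbas : ∀ i : Fin n, ∃ s : ℕ → Set P, (𝓝 (x i)).HasAntitoneBasis s := fun i =>
    (𝓝 (x i)).exists_antitone_basis
  choose s hs using hbas
  set V : Fin n → ℕ → Set P := fun i k => interior (s i k) with hV
  have hVopen : ∀ i k, IsOpen (V i k) := fun i k => isOpen_interior
  have hVmem : ∀ i k, x i ∈ V i k := fun i k =>
    mem_interior_iff_mem_nhds.2 ((hs i).toHasBasis.mem_of_mem trivial)
  -- for each k get a counterexample B k
  have hxA : ∀ i, x i ∈ A := by
    intro i
    have : dpt (x i) ≤ A :=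
      le_trans (Finset.le_sup (hxF₀ i)) (h𝒟lub.1 ⟨F₀, hF₀A, rfl⟩)
    exact dpt_le_iff.1 this
  have hcount : ∀ k : ℕ, ∃ B : Closeds P,
      (∀ i, ((B : Set P) ∩ V i k).Nonempty) ∧ B ∉ 𝒰 := by
    intro k
    have hnsub := hcon n (fun i => V i k) (fun i => hVopen i k)
      (fun i => ⟨x i, hxA i, hVmem i k⟩)
    obtain ⟨B, hB1, hB2⟩ := Set.not_subset.1 hnsub
    exact ⟨B, hB1, hB2⟩
  choose B hB1 hB2 using hcount
  -- choose points
  have hpts : ∀ (k : ℕ) (i : Fin n), ∃ p : P, p ∈ (B k : Set P) ∩ V i k := fun k i => hB1 k i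
  choose e he using hpts
  -- robustness of the limits
  have hrob : ∀ (i : Fin n) (K : Set ℕ), K.Infinite →
      x i ∈ ordCl ((fun k => e k i) '' K) := by
    intro i K hK
    apply closure_subset_ordCl
    rw [mem_closure_iff]
    intro O hO hxO
    have hOnhds : O ∈ 𝓝 (x i) := hO.mem_nhds hxO
    obtain ⟨k₀, -, hk₀⟩ := (hs i).toHasBasis.mem_iff.1 hOnhds
    obtain ⟨k, hkK, hkk₀⟩ := hK.exists_gt k₀
    refine ⟨e k i, ?_, ⟨k, hkK, rfl⟩⟩
    have h1 : e k i ∈ s i k := interior_subset (he k i).2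
    have h2 : s i k ⊆ s i k₀ := (hs i).antitone hkk₀.le
    exact hk₀ (h2 h1)
  -- membership of the finitely generated approximations in the complement
  have hmem : ∀ k, dfin (e k) ∈ 𝒰ᶜ := by
    intro k
    intro hmem𝒰
    apply hB2 k
    apply hup _ hmem𝒰
    exact Finset.sup_le fun i _ => dpt_le_iff.2 (he k i).1
  -- apply the main inductive lemma to 𝒞 = 𝒰ᶜ
  have h𝒞low : IsLowerSet (𝒰ᶜ : Set (Closeds P)) := hup.compl
  have h𝒞dsc : DirSupClosed (𝒰ᶜ : Set (Closeds P)) := hinacc.compl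
  have := TnLemma n (𝒰ᶜ) h𝒞low h𝒞dsc x e hrob hmem
  rw [hdfin] at this
  exact this hF₀𝒰

/-- Finite intersections indexed by `Fin n` of generated-open sets are generated-open. -/
lemma generateOpen_iInter_fin {X : Type*} {g : Set (Set X)} :
    ∀ (n : ℕ) (f : Fin n → Set X), (∀ i, TopologicalSpace.GenerateOpen g (f i)) →
      TopologicalSpace.GenerateOpen g (⋂ i, f i)
  | 0, f, _ => by
    have : (⋂ i, f i) = Set.univ := by simp
    rw [this]
    exact TopologicalSpace.GenerateOpen.univ
  | (n + 1), f, hf => by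
    have : (⋂ i, f i) = f 0 ∩ ⋂ i : Fin n, f i.succ := by
      ext p
      simp only [Set.mem_iInter, Set.mem_inter_iff]
      exact ⟨fun h => ⟨h 0, fun i => h i.succ⟩, fun h i => Fin.cases h.1 h.2 i⟩
    rw [this]
    exact TopologicalSpace.GenerateOpen.inter _ _ (hf 0)
      (generateOpen_iInter_fin n _ fun i => hf i.succ)

end Main

/-- If `(P, σ(P))` is first-countable, then on the complete lattice `Γ(P)` of Scott closed
subsets of `P` the Scott topology coincides with the lower Vietoris topology. -/
theorem scott_eq_lowerVietoris_of_firstCountable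
    {P : Type*} [PartialOrder P] [TopologicalSpace P] [Topology.IsScott P Set.univ]
    [FirstCountableTopology P] :
    Topology.scott (TopologicalSpace.Closeds P) Set.univ = lowerVietoris P := by
  letI tS : TopologicalSpace (Closeds P) := Topology.scott (Closeds P) Set.univ
  haveI hS : Topology.IsScott (Closeds P) Set.univ := ⟨rfl⟩
  apply le_antisymm
  · -- every subbasic lower-Vietoris open is Scott open
    apply le_generateFrom
    rintro S ⟨U, hU, rfl⟩
    rw [Topology.IsScott.isOpen_iff_isUpperSet_and_dirSupInaccOn (D := Set.univ)]
    constructor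
    · intro B B' hle ⟨p, hp1, hp2⟩
      exact ⟨p, hle hp1, hp2⟩
    · intro d _ hne hdir S hlub hS
      obtain ⟨p, hp1, hp2⟩ := hS
      have hcl : p ∈ closure (⋃ D ∈ d, (D : Set P)) := isLUB_closeds_subset hlub hp1
      rw [mem_closure_iff] at hcl
      obtain ⟨q, hq1, hq2⟩ := hcl U hU hp2
      obtain ⟨D, hD, hqD⟩ := Set.mem_iUnion₂.1 hq2
      exact ⟨D, hD, ⟨q, hqD, hq1⟩⟩
  · -- every Scott open is lower-Vietoris open
    intro 𝒰 h𝒰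
    rw [Topology.IsScott.isOpen_iff_isUpperSet_and_dirSupInaccOn (D := Set.univ)] at h𝒰
    obtain ⟨hup, hinacc'⟩ := h𝒰
    have hinacc : DirSupInacc 𝒰 := dirSupInaccOn_univ.1 hinacc'
    show TopologicalSpace.GenerateOpen _ 𝒰
    have : 𝒰 = ⋃₀ {T : Set (Closeds P) |
        TopologicalSpace.GenerateOpen
          {S | ∃ U : Set P, IsOpen U ∧
            S = {A : Closeds P | ((A : Set P) ∩ U).Nonempty}} T ∧ T ⊆ 𝒰} := by
      apply Set.Subset.antisymm
      · intro A hA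
        obtain ⟨n, V, hVopen, hAV, hsub⟩ := exists_basic 𝒰 hup hinacc A hA
        refine ⟨⋂ i, {B : Closeds P | ((B : Set P) ∩ V i).Nonempty}, ⟨?_, ?_⟩, ?_⟩
        · exact generateOpen_iInter_fin n _ fun i =>
            TopologicalSpace.GenerateOpen.basic _ ⟨V i, hVopen i, rfl⟩
        · intro B hB
          exact hsub fun i => Set.mem_iInter.1 hB i
        · exact Set.mem_iInter.2 hAV
      · rintro A ⟨T, ⟨_, hT𝒰⟩, hAT⟩
        exact hT𝒰 hAT
    rw [this]
    exact TopologicalSpace.GenerateOpen.sUnion _ fun T hT => hT.1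
end

section
/- Let P be a poset. The following statements are equivalent: (1) (P, σ(P)) is core-compact; (2) (Γ(P), σ(Γ(P))) is core-compact; (3) (Γ(P), σ(Γ(P))) is sober and locally compact; (4) (Γ(P), σ(Γ(P))) is sober and locally compact and σ(Γ(P)) = υ(Γ(P)). -/
open Topology TopologicalSpace Set

/-- `x` is way-below `y`: for every directed set `d` having a least upper bound `a`,
if `y ≤ a` then some element of `d` dominates `x`. -/
def WayBelow {α : Type*} [Preorder α] (x y : α) : Prop :=
  ∀ d : Set α, d.Nonempty → DirectedOn (· ≤ ·) d → ∀ a : α, IsLUB d a → y ≤ a → ∃ z ∈ d, x ≤ z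

/-- A poset is continuous if for every `x` the set of elements way-below `x` is directed
(in particular nonempty) with least upper bound `x`. -/
def ContinuousPoset (α : Type*) [Preorder α] : Prop :=
  ∀ x : α, {d : α | WayBelow d x}.Nonempty ∧ DirectedOn (· ≤ ·) {d : α | WayBelow d x} ∧
    IsLUB {d : α | WayBelow d x} x

/-- A topological space is core-compact if its lattice of open subsets is a continuous
lattice. -/
def CoreCompact (X : Type*) [TopologicalSpace X] : Prop :=
  ContinuousPoset (TopologicalSpace.Opens X)

set_option maxHeartbeats 1000000 in
section
set_option linter.unusedSectionVars false
set_option linter.unusedVariables false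

section WayBelowLemmas
variable {α : Type*} [Preorder α] {x x' y z : α}

lemma wayBelowLe (h : WayBelow x y) : x ≤ y := by
  obtain ⟨z, hz, hxz⟩ := h {y} ⟨y, rfl⟩ (directedOn_singleton y)
    y isLUB_singleton le_rfl
  exact hz ▸ hxz

lemma wayBelowMonoLeft (hx : x' ≤ x) (h : WayBelow x y) : WayBelow x' y :=
  fun d hd hdir a ha hya => by
    obtain ⟨w, hw, hxw⟩ := h d hd hdir a ha hya
    exact ⟨w, hw, hx.trans hxw⟩

lemma wayBelowMonoRight (h : WayBelow x y) (hyz : y ≤ z) : WayBelow x z :=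
  fun d hd hdir a ha hza => h d hd hdir a ha (hyz.trans hza)

lemma directedOnImage {β : Type*} [Preorder β] {f : α → β} (hf : Monotone f)
    {d : Set α} (hd : DirectedOn (· ≤ ·) d) : DirectedOn (· ≤ ·) (f '' d) := by
  rintro _ ⟨a, ha, rfl⟩ _ ⟨b, hb, rfl⟩
  obtain ⟨c, hc, hac, hbc⟩ := hd a ha b hb
  exact ⟨f c, ⟨c, hc, rfl⟩, hf hac, hf hbc⟩

lemma wayBelowInterpolation (hC : ContinuousPoset α) (h : WayBelow x y) :
    ∃ b, WayBelow x b ∧ WayBelow b y := by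
  set E : Set α := {d | ∃ b, WayBelow d b ∧ WayBelow b y} with hE
  have hne : E.Nonempty := by
    obtain ⟨b, hb⟩ := (hC y).1
    obtain ⟨d, hd⟩ := (hC b).1
    exact ⟨d, b, hd, hb⟩
  have hdir : DirectedOn (· ≤ ·) E := by
    rintro d1 ⟨b1, hd1, hb1⟩ d2 ⟨b2, hd2, hb2⟩
    obtain ⟨b, hb, hb1b, hb2b⟩ := (hC y).2.1 b1 hb1 b2 hb2
    obtain ⟨d, hd, hd1d, hd2d⟩ := (hC b).2.1 d1 (wayBelowMonoRight hd1 hb1b) d2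
      (wayBelowMonoRight hd2 hb2b)
    exact ⟨d, ⟨b, hd, hb⟩, hd1d, hd2d⟩
  have hlub : IsLUB E y := by
    constructor
    · rintro d ⟨b, hd, hb⟩
      exact (wayBelowLe hd).trans (wayBelowLe hb)
    · intro u hu
      refine (hC y).2.2.2 ?_
      rintro b hb
      refine (hC b).2.2.2 ?_
      rintro d hd
      exact hu ⟨b, hd, hb⟩
  obtain ⟨d, ⟨b, hdb, hby⟩, hxd⟩ := h E hne hdir y hlub le_rfl
  exact ⟨b, wayBelowMonoLeft hxd hdb, hby⟩

lemma continuousAt_of_directed_subset {v : α} {T : Set α} (hT : ∀ t ∈ T, WayBelow t v)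
    (hne : T.Nonempty) (hdir : DirectedOn (· ≤ ·) T) (hlub : IsLUB T v) :
    {d : α | WayBelow d v}.Nonempty ∧ DirectedOn (· ≤ ·) {d : α | WayBelow d v} ∧
      IsLUB {d : α | WayBelow d v} v := by
  refine ⟨hne.imp fun t ht => hT t ht, ?_, ?_, fun u hu => hlub.2 fun t ht => hu (hT t ht)⟩
  · intro c1 hc1 c2 hc2
    obtain ⟨t1, ht1, hc1t⟩ := hc1 T hne hdir v hlub le_rfl
    obtain ⟨t2, ht2, hc2t⟩ := hc2 T hne hdir v hlub le_rfl
    obtain ⟨t, ht, h1, h2⟩ := hdir t1 ht1 t2 ht2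
    exact ⟨t, hT t ht, hc1t.trans h1, hc2t.trans h2⟩
  · exact fun d hd => wayBelowLe hd
end WayBelowLemmas

section LC
variable {X : Type*} [TopologicalSpace X]

lemma coreCompact_of_locallyCompact [LocallyCompactSpace X] : CoreCompact X := by
  intro V
  refine continuousAt_of_directed_subset
    (T := {U : Opens X | ∃ K : Set X, IsCompact K ∧ (U : Set X) ⊆ K ∧ K ⊆ (V : Set X)})
    ?_ ⟨⊥, ∅, isCompact_empty, by simp, by simp⟩ ?_ ?_
  · rintro U ⟨K, hK, hUK, hKV⟩ d hd hdir a ha hVa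
    have hcov : K ⊆ ⋃ i : d, ((i : Opens X) : Set X) := by
      intro x hx
      have hmem : x ∈ (a : Set X) := hVa (hKV hx)
      have ha' : (a : Set X) = ⋃ U ∈ d, (U : Set X) := by
        rw [← ha.sSup_eq, Opens.coe_sSup]
      rw [ha'] at hmem
      simpa [mem_iUnion] using hmem
    obtain ⟨t, ht⟩ := hK.elim_finite_subcover (fun i : d => ((i : Opens X) : Set X))
      (fun i => (i : Opens X).isOpen) hcov
    have hdir' : Directed (· ≤ ·) (fun i : d => (i : Opens X)) :=
      directedOn_iff_directed.mp hdir
    haveI : Nonempty d := hd.to_subtype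
    obtain ⟨z, hz⟩ := hdir'.finset_le t
    refine ⟨z, z.2, ?_⟩
    intro x hx
    have hx2 := ht (hUK hx)
    rw [mem_iUnion₂] at hx2
    obtain ⟨i, hit, hxi⟩ := hx2
    exact hz i hit hxi
  · rintro U1 ⟨K1, h1, h1', h1''⟩ U2 ⟨K2, h2, h2', h2''⟩
    exact ⟨U1 ⊔ U2, ⟨K1 ∪ K2, h1.union h2, by
      rw [Opens.coe_sup]; exact union_subset_union h1' h2', union_subset h1'' h2''⟩,
      le_sup_left, le_sup_right⟩
  · constructor
    · rintro U ⟨K, _, hUK, hKV⟩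
      exact fun x hx => hKV (hUK hx)
    · intro u hu
      intro x hx
      obtain ⟨s, hs, hsV, hscomp⟩ := local_compact_nhds (V.isOpen.mem_nhds hx)
      have hmem : (⟨interior s, isOpen_interior⟩ : Opens X) ∈
          {U : Opens X | ∃ K : Set X, IsCompact K ∧ (U : Set X) ⊆ K ∧ K ⊆ (V : Set X)} :=
        ⟨s, hscomp, interior_subset, hsV⟩
      exact hu hmem (mem_interior_iff_mem_nhds.mpr hs)
end LC
section Main
set_option linter.unusedSectionVars false
variable {P : Type*} [PartialOrder P] [TopologicalSpace P] [Topology.IsScott P Set.univ]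

/-- principal ideal as a Scott-closed set -/
def IicC (x : P) : Closeds P := ⟨Iic x, isClosed_Iic⟩

@[simp] lemma mem_IicC {x y : P} : x ∈ IicC y ↔ x ≤ y := Iff.rfl

lemma closeds_le_iff {A B : Closeds P} : A ≤ B ↔ (A : Set P) ⊆ (B : Set P) := Iff.rfl

lemma closeds_isLowerSet (A : Closeds P) : IsLowerSet (A : Set P) :=
  Topology.IsScott.isLowerSet_of_isClosed A.isClosed

lemma closeds_dirSupClosed (A : Closeds P) : DirSupClosed (A : Set P) :=
  Topology.IsScott.dirSupClosed_of_isClosed A.isClosed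

lemma isOpenP_iff {U : Set P} : IsOpen U ↔ IsUpperSet U ∧ DirSupInacc U := by
  rw [Topology.IsScott.isOpen_iff_isUpperSet_and_dirSupInaccOn (D := Set.univ), dirSupInaccOn_univ]

lemma isOpenG_iff {𝒰 : Set (Closeds P)} :
    IsOpen[Topology.scott (Closeds P) Set.univ] 𝒰 ↔ IsUpperSet 𝒰 ∧ DirSupInacc 𝒰 := by
  letI := Topology.scott (Closeds P) Set.univ
  haveI : Topology.IsScott (Closeds P) Set.univ := ⟨rfl⟩
  rw [Topology.IsScott.isOpen_iff_isUpperSet_and_dirSupInaccOn (D := Set.univ), dirSupInaccOn_univ]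

/-- the diamond set of an open set -/
def dia (U : Set P) : Set (Closeds P) := {A : Closeds P | ((A : Set P) ∩ U).Nonempty}

lemma dia_upper (U : Set P) : IsUpperSet (dia U) := by
  rintro A B hAB ⟨x, hxA, hxU⟩
  exact ⟨x, hAB hxA, hxU⟩

lemma dia_scottOpen {U : Set P} (hU : IsOpen U) :
    IsOpen[Topology.scott (Closeds P) Set.univ] (dia U) := by
  rw [isOpenG_iff]
  refine ⟨dia_upper U, ?_⟩
  intro 𝒟 hne hdir S hS hSU
  by_contra hcon
  rw [Set.not_nonempty_iff_eq_empty, Set.eq_empty_iff_forall_notMem] at hcon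
  have hub : S ≤ ⟨(S : Set P) ∩ Uᶜ, S.isClosed.inter hU.isClosed_compl⟩ := by
    refine hS.2 ?_
    intro D hD
    rw [closeds_le_iff]
    refine subset_inter (hS.1 hD) ?_
    intro x hx
    by_contra hxU
    exact hcon D ⟨hD, x, hx, not_not.mp hxU⟩
  obtain ⟨x, hxS, hxU⟩ := hSU
  exact (hub hxS).2 hxU

lemma isLUB_image_sup {β : Type*} [SemilatticeSup β] {s : Set β} (hs : s.Nonempty) {a : β}
    (h : IsLUB s a) (D : β) : IsLUB ((· ⊔ D) '' s) (a ⊔ D) := by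
  constructor
  · rintro _ ⟨x, hx, rfl⟩
    exact sup_le_sup_right (h.1 hx) D
  · intro u hu
    obtain ⟨x0, hx0⟩ := hs
    have hDu : D ≤ u := le_trans le_sup_right (hu ⟨x0, hx0, rfl⟩)
    have hau : a ≤ u := h.2 fun x hx => le_trans le_sup_left (hu ⟨x, hx, rfl⟩)
    exact sup_le hau hDu

lemma isLUB_IicC_image {d : Set P} (hne : d.Nonempty) (hdir : DirectedOn (· ≤ ·) d) {a : P}
    (ha : IsLUB d a) : IsLUB (IicC '' d) (IicC a) := by
  constructor
  · rintro _ ⟨z, hz, rfl⟩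
    exact fun w hw => le_trans hw (ha.1 hz)
  · intro C hC
    have hdC : d ⊆ (C : Set P) := fun z hz => hC (mem_image_of_mem _ hz) (le_refl z)
    have haC : a ∈ (C : Set P) := closeds_dirSupClosed C hdC hne hdir ha
    exact fun w hw => closeds_isLowerSet C hw haC

lemma IicC_monotone : Monotone (IicC : P → Closeds P) :=
  fun _ _ h _ hw => le_trans hw h
lemma slice_open {𝒰 : Set (Closeds P)} (hup : IsUpperSet 𝒰) (hin : DirSupInacc 𝒰)
    (D : Closeds P) : IsOpen {a : P | IicC a ⊔ D ∈ 𝒰} := by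
  rw [isOpenP_iff]
  constructor
  · intro a b hab ha
    exact hup (sup_le_sup_right (IicC_monotone hab) D) ha
  · intro d hne hdir c hc hmem
    have h1 : IsLUB ((· ⊔ D) '' (IicC '' d)) (IicC c ⊔ D) :=
      isLUB_image_sup (hne.image _) (isLUB_IicC_image hne hdir hc) D
    have h2 : DirectedOn (· ≤ ·) ((· ⊔ D) '' (IicC '' d)) :=
      directedOnImage (fun _ _ h => sup_le_sup_right h D) (directedOnImage IicC_monotone hdir)
    obtain ⟨E, hE, hEmem⟩ := hin ((hne.image _).image _) h2 h1 hmem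
    obtain ⟨_, ⟨z, hz, rfl⟩, rfl⟩ := hE
    exact ⟨z, hz, hEmem⟩

/-- the "slice" map of a Scott open family of closed sets -/
def Phi {𝒰 : Set (Closeds P)} (hup : IsUpperSet 𝒰) (hin : DirSupInacc 𝒰) (D : Closeds P) :
    Opens P := ⟨{a : P | IicC a ⊔ D ∈ 𝒰}, slice_open hup hin D⟩

lemma Phi_monotone {𝒰 : Set (Closeds P)} (hup : IsUpperSet 𝒰) (hin : DirSupInacc 𝒰) :
    Monotone (Phi hup hin) := by
  intro D D' h a ha
  exact hup (sup_le_sup_left h _) ha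

lemma Phi_isLUB {𝒰 : Set (Closeds P)} (hup : IsUpperSet 𝒰) (hin : DirSupInacc 𝒰)
    {𝒟 : Set (Closeds P)} (hne : 𝒟.Nonempty) (hdir : DirectedOn (· ≤ ·) 𝒟) {S : Closeds P}
    (hS : IsLUB 𝒟 S) : IsLUB (Phi hup hin '' 𝒟) (Phi hup hin S) := by
  constructor
  · rintro _ ⟨D, hD, rfl⟩
    exact Phi_monotone hup hin (hS.1 hD)
  · intro u hu
    intro x hx
    have hx' : IicC x ⊔ S ∈ 𝒰 := hx
    have h1 : IsLUB ((· ⊔ IicC x) '' 𝒟) (S ⊔ IicC x) := isLUB_image_sup hne hS (IicC x)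
    have h2 : DirectedOn (· ≤ ·) ((· ⊔ IicC x) '' 𝒟) :=
      directedOnImage (fun _ _ h => sup_le_sup_right h _) hdir
    have hmem : S ⊔ IicC x ∈ 𝒰 := by rwa [sup_comm] at hx'
    obtain ⟨_, ⟨D, hD, rfl⟩, hDmem⟩ := hin (hne.image _) h2 h1 hmem
    have : x ∈ (Phi hup hin D : Set P) := by
      show IicC x ⊔ D ∈ 𝒰
      have hDmem' : D ⊔ IicC x ∈ 𝒰 := hDmem
      rwa [sup_comm] at hDmem'
    exact hu (mem_image_of_mem _ hD) this

/-- supremum of principal ideals over a list -/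
def supL (l : List P) : Closeds P := (l.map IicC).foldr (· ⊔ ·) ⊥

@[simp] lemma supL_nil : supL ([] : List P) = ⊥ := rfl

@[simp] lemma supL_cons (x : P) (l : List P) : supL (x :: l) = IicC x ⊔ supL l := rfl

lemma supL_append (l l' : List P) : supL (l ++ l') = supL l ⊔ supL l' := by
  induction l with
  | nil => simp
  | cons x l ih => simp [ih, sup_assoc]

lemma IicC_le_supL {x : P} {l : List P} (hx : x ∈ l) : IicC x ≤ supL l := by
  induction l with
  | nil => simp at hx
  | cons y l ih =>
    rcases List.mem_cons.mp hx with rfl | hx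
    · simp
    · exact le_trans (ih hx) (by simp)

lemma supL_le {l : List P} {A : Closeds P} (h : ∀ x ∈ l, x ∈ (A : Set P)) : supL l ≤ A := by
  induction l with
  | nil => simp
  | cons y l ih =>
    rw [supL_cons]
    refine sup_le ?_ (ih fun x hx => h x (List.mem_cons_of_mem _ hx))
    intro w hw
    exact closeds_isLowerSet A hw (h y (List.mem_cons_self))

lemma exists_list_supL_mem {𝒰 : Set (Closeds P)} (hup : IsUpperSet 𝒰) (hin : DirSupInacc 𝒰)
    {A : Closeds P} (hA : A ∈ 𝒰) :
    ∃ l : List P, (∀ x ∈ l, x ∈ (A : Set P)) ∧ supL l ∈ 𝒰 := by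
  set 𝒟 : Set (Closeds P) := {D | ∃ l : List P, (∀ x ∈ l, x ∈ (A : Set P)) ∧ D = supL l} with h𝒟
  have hne : 𝒟.Nonempty := ⟨⊥, [], by simp, rfl⟩
  have hdir : DirectedOn (· ≤ ·) 𝒟 := by
    rintro _ ⟨l1, hl1, rfl⟩ _ ⟨l2, hl2, rfl⟩
    refine ⟨supL (l1 ++ l2), ⟨l1 ++ l2, ?_, rfl⟩, ?_, ?_⟩
    · intro x hx
      rcases List.mem_append.mp hx with h | h
      · exact hl1 x h
      · exact hl2 x h
    · rw [supL_append]; exact le_sup_left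
    · rw [supL_append]; exact le_sup_right
  have hlub : IsLUB 𝒟 A := by
    constructor
    · rintro _ ⟨l, hl, rfl⟩
      exact supL_le hl
    · intro u hu
      intro x hx
      have : supL [x] ∈ 𝒟 := ⟨[x], by simpa using hx, rfl⟩
      have hle : IicC x ≤ u := by
        have := hu this
        simpa using this
      exact hle (le_refl x)
  obtain ⟨D, hD, hDmem⟩ := hin hne hdir hlub hA
  obtain ⟨l, hl, rfl⟩ := hD
  exact ⟨l, hl, hDmem⟩
lemma exists_wayBelow_mem' {X : Type*} [TopologicalSpace X] (hcc : CoreCompact X) (U : Opens X)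
    {x : X} (hx : x ∈ (U : Set X)) : ∃ V : Opens X, WayBelow V U ∧ x ∈ (V : Set X) := by
  have h := (hcc U).2.2
  have hx' : x ∈ sSup {d : Opens X | WayBelow d U} := by rw [h.sSup_eq]; exact hx
  have hx2 : x ∈ (⋃ V ∈ {d : Opens X | WayBelow d U}, (V : Set X)) := by
    rw [← Opens.coe_sSup]; exact hx'
  rw [mem_iUnion₂] at hx2
  obtain ⟨V, hV, hxV⟩ := hx2
  exact ⟨V, hV, hxV⟩

lemma key_induction (hcc : CoreCompact P) (l : List P) :
    ∀ 𝒰 : Set (Closeds P), ∀ hup : IsUpperSet 𝒰, ∀ hin : DirSupInacc 𝒰, supL l ∈ 𝒰 →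
    ∃ Vs : List (Opens P), List.Forall₂ (fun x (V : Opens P) => x ∈ (V : Set P)) l Vs ∧
      ∀ ys : List P, List.Forall₂ (fun (V : Opens P) y => y ∈ (V : Set P)) Vs ys →
        supL ys ∈ 𝒰 := by
  induction l with
  | nil =>
    intro 𝒰 hup hin h
    refine ⟨[], List.Forall₂.nil, ?_⟩
    intro ys hys
    rw [List.forall₂_nil_left_iff] at hys
    subst hys
    simpa using h
  | cons x l ih =>
    intro 𝒰 hup hin h
    have hx : x ∈ (Phi hup hin (supL l) : Set P) := h
    obtain ⟨V, hV, hxV⟩ := exists_wayBelow_mem' hcc _ hx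
    have hWup : IsUpperSet {C : Closeds P | WayBelow V (Phi hup hin C)} :=
      fun C C' hCC' hC => wayBelowMonoRight hC (Phi_monotone hup hin hCC')
    have hWin : DirSupInacc {C : Closeds P | WayBelow V (Phi hup hin C)} := by
      intro 𝒟 hne hdir S hS hmem
      obtain ⟨V', hVV', hV'S⟩ := wayBelowInterpolation hcc hmem
      obtain ⟨_, ⟨C, hC, rfl⟩, hle⟩ := hV'S (Phi hup hin '' 𝒟) (hne.image _)
        (directedOnImage (Phi_monotone hup hin) hdir) _ (Phi_isLUB hup hin hne hdir hS) le_rfl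
      exact ⟨C, hC, wayBelowMonoRight hVV' hle⟩
    obtain ⟨Vs, hVs, hVs2⟩ := ih _ hWup hWin hV
    refine ⟨V :: Vs, List.Forall₂.cons hxV hVs, ?_⟩
    intro ys hys
    obtain ⟨y, ys', hyV, hys', rfl⟩ := List.forall₂_cons_left_iff.mp hys
    have h1 : WayBelow V (Phi hup hin (supL ys')) := hVs2 ys' hys'
    have h2 : y ∈ (Phi hup hin (supL ys') : Set P) := (wayBelowLe h1) hyV
    exact h2

lemma forall₂_mem_right {γ δ : Type*} {R : γ → δ → Prop} {l : List γ} {m : List δ}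
    (h : List.Forall₂ R l m) {b : δ} (hb : b ∈ m) : ∃ a ∈ l, R a b := by
  induction h with
  | nil => simp at hb
  | cons hR hF ih =>
    rcases List.mem_cons.mp hb with rfl | hb
    · exact ⟨_, List.mem_cons_self, hR⟩
    · obtain ⟨a, ha, hab⟩ := ih hb
      exact ⟨a, List.mem_cons_of_mem _ ha, hab⟩

lemma pick_ys (B : Closeds P) (Vs : List (Opens P))
    (h : ∀ V ∈ Vs, ((B : Set P) ∩ (V : Set P)).Nonempty) :
    ∃ ys : List P, List.Forall₂ (fun (V : Opens P) y => y ∈ (V : Set P)) Vs ys ∧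
      ∀ y ∈ ys, y ∈ (B : Set P) := by
  induction Vs with
  | nil => exact ⟨[], List.Forall₂.nil, by simp⟩
  | cons V Vs ih =>
    obtain ⟨ys, hys, hysB⟩ := ih fun W hW => h W (List.mem_cons_of_mem _ hW)
    obtain ⟨y, hyB, hyV⟩ := h V (List.mem_cons_self)
    refine ⟨y :: ys, List.Forall₂.cons hyV hys, ?_⟩
    intro z hz
    rcases List.mem_cons.mp hz with rfl | hz
    · exact hyB
    · exact hysB z hz

/-- finite intersections of diamonds over a list of opens -/
def nuS (Vs : List (Opens P)) : Set (Closeds P) :=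
  {B : Closeds P | ∀ V ∈ Vs, ((B : Set P) ∩ (V : Set P)).Nonempty}

lemma nuS_open (Vs : List (Opens P)) : IsOpen[lowerVietoris P] (nuS Vs) := by
  induction Vs with
  | nil =>
    have : nuS ([] : List (Opens P)) = univ := by
      ext B; simp [nuS]
    rw [this]
    exact TopologicalSpace.GenerateOpen.univ
  | cons V Vs ih =>
    have : nuS (V :: Vs) = {B : Closeds P | ((B : Set P) ∩ (V : Set P)).Nonempty} ∩ nuS Vs := by
      ext B
      simp only [nuS, mem_setOf_eq, mem_inter_iff, List.mem_cons]
      constructor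
      · intro h
        exact ⟨h V (Or.inl rfl), fun W hW => h W (Or.inr hW)⟩
      · rintro ⟨h1, h2⟩ W (rfl | hW)
        · exact h1
        · exact h2 W hW
    rw [this]
    exact TopologicalSpace.GenerateOpen.inter _ _
      (TopologicalSpace.GenerateOpen.basic _ ⟨(V : Set P), V.isOpen, rfl⟩) ih

lemma scottOpen_vietorisOpen (hcc : CoreCompact P) {𝒰 : Set (Closeds P)}
    (hup : IsUpperSet 𝒰) (hin : DirSupInacc 𝒰) : IsOpen[lowerVietoris P] 𝒰 := by
  have hcover : 𝒰 = ⋃₀ {s : Set (Closeds P) | IsOpen[lowerVietoris P] s ∧ s ⊆ 𝒰} := by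
    apply Subset.antisymm
    · intro A hA
      obtain ⟨l, hlA, hl⟩ := exists_list_supL_mem hup hin hA
      obtain ⟨Vs, hVs, hVs2⟩ := key_induction hcc l 𝒰 hup hin hl
      refine ⟨nuS Vs, ⟨nuS_open Vs, ?_⟩, ?_⟩
      · intro B hB
        obtain ⟨ys, hys, hysB⟩ := pick_ys B Vs hB
        exact hup (supL_le hysB) (hVs2 ys hys)
      · intro V hV
        obtain ⟨x, hxl, hxV⟩ := forall₂_mem_right hVs hV
        exact ⟨x, hlA x hxl, hxV⟩
    · rintro A ⟨s, ⟨_, hs𝒰⟩, hAs⟩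
      exact hs𝒰 hAs
  rw [hcover]
  exact TopologicalSpace.GenerateOpen.sUnion _ fun s hs => hs.1

lemma scott_eq_lowerVietoris (hcc : CoreCompact P) :
    Topology.scott (Closeds P) Set.univ = lowerVietoris P := by
  apply le_antisymm
  · apply @le_generateFrom (Closeds P) (Topology.scott (Closeds P) Set.univ)
    rintro s ⟨U, hU, rfl⟩
    exact dia_scottOpen hU
  · rw [TopologicalSpace.le_def]
    intro s hs
    rw [isOpenG_iff] at hs
    exact scottOpen_vietorisOpen hcc hs.1 hs.2
lemma vietoris_open_upper {s : Set (Closeds P)} (hs : IsOpen[lowerVietoris P] s) :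
    IsUpperSet s := by
  have hs' : TopologicalSpace.GenerateOpen
      {S | ∃ U : Set P, IsOpen U ∧ S = {A : Closeds P | ((A : Set P) ∩ U).Nonempty}} s := hs
  clear hs
  induction hs' with
  | basic t ht =>
    obtain ⟨U, hU, rfl⟩ := ht
    exact dia_upper U
  | univ => exact isUpperSet_univ
  | inter t1 t2 _ _ ih1 ih2 => exact ih1.inter ih2
  | sUnion S _ ih =>
    intro A B hAB hA
    obtain ⟨t, ht, hAt⟩ := hA
    exact ⟨t, ht, ih t ht hAB hAt⟩

lemma vietoris_closed_lower {s : Set (Closeds P)} (hs : IsClosed[lowerVietoris P] s) :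
    IsLowerSet s := by
  have : IsUpperSet sᶜ := vietoris_open_upper hs.isOpen_compl
  simpa using this.compl

lemma vietoris_closure_singleton (C : Closeds P) :
    @closure _ (lowerVietoris P) {C} = {B : Closeds P | B ≤ C} := by
  letI := lowerVietoris P
  apply Subset.antisymm
  · apply closure_minimal (by simp)
    rw [← isOpen_compl_iff]
    have heq : {B : Closeds P | B ≤ C}ᶜ = dia ((C : Set P)ᶜ) := by
      ext B
      simp only [mem_compl_iff, mem_setOf_eq, dia]
      constructor
      · intro h
        by_contra hcon
        rw [Set.not_nonempty_iff_eq_empty, Set.eq_empty_iff_forall_notMem] at hcon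
        refine h ?_
        intro x hx
        by_contra hxC
        exact hcon x ⟨hx, hxC⟩
      · rintro ⟨x, hxB, hxC⟩ hle
        exact hxC (hle hxB)
    rw [heq]
    exact TopologicalSpace.GenerateOpen.basic _ ⟨(C : Set P)ᶜ, C.isClosed.isOpen_compl, rfl⟩
  · intro B hB
    rw [mem_closure_iff]
    intro o ho hBo
    exact ⟨C, vietoris_open_upper ho hB hBo, rfl⟩

lemma irreducible_meets_sInter {S : Set (Closeds P)} (hS : @IsIrreducible _ (lowerVietoris P) S)
    (f : Set (Set (Closeds P))) (hfin : f.Finite) (hop : ∀ t ∈ f, IsOpen[lowerVietoris P] t)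
    (hmeet : ∀ t ∈ f, (S ∩ t).Nonempty) : (S ∩ ⋂₀ f).Nonempty := by
  letI := lowerVietoris P
  revert hop hmeet
  refine Set.Finite.induction_on
    (motive := fun f _ => (∀ t ∈ f, IsOpen t) → (∀ t ∈ f, (S ∩ t).Nonempty) → (S ∩ ⋂₀ f).Nonempty)
    f hfin (fun _ _ => by simpa using hS.nonempty) ?_
  intro a f ha hf ih hop hmeet
  rw [sInter_insert]
  exact hS.2 a (⋂₀ f) (hop a (mem_insert _ _))
    (Set.Finite.isOpen_sInter hf fun t ht => hop t (mem_insert_of_mem _ ht))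
    (hmeet a (mem_insert _ _))
    (ih (fun t ht => hop t (mem_insert_of_mem _ ht)) fun t ht => hmeet t (mem_insert_of_mem _ ht))

lemma vietoris_quasiSober : @QuasiSober (Closeds P) (lowerVietoris P) := by
  letI := lowerVietoris P
  constructor
  intro S hSirr hScl
  set C : Closeds P := ⟨closure (⋃ A ∈ S, (A : Set P)), isClosed_closure⟩ with hC
  have hCub : ∀ B ∈ S, B ≤ C := fun B hB x hx => subset_closure (mem_biUnion hB hx)
  have hCS : C ∈ S := by
    by_contra hcon
    have hopen : IsOpen Sᶜ := hScl.isOpen_compl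
    have basis := TopologicalSpace.isTopologicalBasis_of_subbasis
      (rfl : (lowerVietoris P) = TopologicalSpace.generateFrom _)
    obtain ⟨b, hb, hCb, hbS⟩ := basis.exists_subset_of_mem_open hcon hopen
    obtain ⟨f, ⟨hfin, hfsub⟩, rfl⟩ := hb
    have hmeet : ∀ t ∈ f, (S ∩ t).Nonempty := by
      intro t ht
      obtain ⟨U, hU, rfl⟩ := hfsub ht
      have hCt : ((C : Set P) ∩ U).Nonempty := hCb _ ht
      have hUne : ((⋃ A ∈ S, (A : Set P)) ∩ U).Nonempty := by
        obtain ⟨x, hxC, hxU⟩ := hCt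
        obtain ⟨y, hy, hyU⟩ := mem_closure_iff.mp hxC U hU hxU
        exact ⟨y, hyU, hy⟩
      obtain ⟨y, hyUn, hyU⟩ := hUne
      rw [mem_iUnion₂] at hyUn
      obtain ⟨A, hA, hyA⟩ := hyUn
      exact ⟨A, hA, y, hyA, hyU⟩
    obtain ⟨A, hAS, hAb⟩ := irreducible_meets_sInter hSirr f hfin
      (fun t ht => by
        obtain ⟨U, hU, rfl⟩ := hfsub ht
        exact TopologicalSpace.GenerateOpen.basic _ ⟨U, hU, rfl⟩) hmeet
    exact hbS hAb hAS
  refine ⟨C, ?_⟩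
  rw [IsGenericPoint, vietoris_closure_singleton]
  apply Subset.antisymm
  · intro B hB
    exact vietoris_closed_lower hScl hB hCS
  · exact hCub
lemma Q_compact (𝔉 : Set (Opens P))
    (hacc : ∀ W ∈ 𝔉, ∀ 𝒮 : Set (Set P), (∀ U ∈ 𝒮, IsOpen U) → (W : Set P) ⊆ ⋃₀ 𝒮 →
      ∃ F : Finset (Set P), ↑F ⊆ 𝒮 ∧ ∃ W' ∈ 𝔉, (W' : Set P) ⊆ ⋃₀ (F : Set (Set P))) :
    @IsCompact _ (lowerVietoris P)
      {B : Closeds P | ∀ W ∈ 𝔉, ((B : Set P) ∩ (W : Set P)).Nonempty} := by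
  letI := lowerVietoris P
  set Q : Set (Closeds P) := {B | ∀ W ∈ 𝔉, ((B : Set P) ∩ (W : Set P)).Nonempty} with hQ
  rw [isCompact_iff_ultrafilter_le_nhds]
  intro 𝒰 h𝒰
  rw [Filter.le_principal_iff] at h𝒰
  set 𝒮₀ : Set (Set P) := {U | IsOpen U ∧ dia U ∉ (𝒰 : Filter (Closeds P))} with h𝒮₀
  set A0 : Closeds P := ⟨(⋃₀ 𝒮₀)ᶜ, (isOpen_sUnion fun U hU => hU.1).isClosed_compl⟩ with hA0
  have hA0Q : A0 ∈ Q := by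
    intro W hW
    by_contra hcon
    rw [Set.not_nonempty_iff_eq_empty, Set.eq_empty_iff_forall_notMem] at hcon
    have hWsub : (W : Set P) ⊆ ⋃₀ 𝒮₀ := by
      intro x hx
      by_contra hx0
      exact hcon x ⟨hx0, hx⟩
    obtain ⟨F, hF𝒮, W', hW', hW'F⟩ := hacc W hW 𝒮₀ (fun U hU => hU.1) hWsub
    have hQsub : Q ⊆ ⋃ U ∈ (F : Set (Set P)), dia U := by
      intro B hB
      obtain ⟨x, hxB, hxW'⟩ := hB W' hW'
      obtain ⟨U, hU, hxU⟩ := hW'F hxW'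
      rw [mem_iUnion₂]
      exact ⟨U, hU, x, hxB, hxU⟩
    have hmem : (⋃ U ∈ (F : Set (Set P)), dia U) ∈ (𝒰 : Filter (Closeds P)) :=
      Filter.mem_of_superset h𝒰 hQsub
    obtain ⟨U, hUF, hUmem⟩ := (Ultrafilter.finite_biUnion_mem_iff F.finite_toSet).mp hmem
    exact (hF𝒮 hUF).2 hUmem
  refine ⟨A0, hA0Q, ?_⟩
  have hnhds : @nhds _ (lowerVietoris P) A0 =
      ⨅ s ∈ {s | A0 ∈ s ∧ s ∈ {S | ∃ U : Set P, IsOpen U ∧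
        S = {A : Closeds P | ((A : Set P) ∩ U).Nonempty}}}, Filter.principal s :=
    nhds_generateFrom
  rw [hnhds]
  refine le_iInf₂ ?_
  rintro s ⟨hA0s, U, hUopen, rfl⟩
  rw [Filter.le_principal_iff]
  by_contra hcon
  have hU𝒮 : U ∈ 𝒮₀ := ⟨hUopen, hcon⟩
  obtain ⟨x, hxA0, hxU⟩ := hA0s
  exact hxA0 ⟨U, hU𝒮, hxU⟩

lemma vietoris_locallyCompact (hcc : CoreCompact P) :
    @LocallyCompactSpace (Closeds P) (lowerVietoris P) := by
  classical
  letI := lowerVietoris P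
  constructor
  intro A n hn
  obtain ⟨O, hOn, hOopen, hAO⟩ := mem_nhds_iff.mp hn
  have basis := TopologicalSpace.isTopologicalBasis_of_subbasis
    (rfl : (lowerVietoris P) = TopologicalSpace.generateFrom _)
  obtain ⟨b, hb, hAb, hbO⟩ := basis.exists_subset_of_mem_open hAO hOopen
  obtain ⟨f, ⟨hfin, hfsub⟩, rfl⟩ := hb
  haveI : Finite ↥f := hfin.to_subtype
  choose U hUopen hUeq using fun t : ↥f => hfsub t.2
  have hAmeet : ∀ t : ↥f, ((A : Set P) ∩ U t).Nonempty := by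
    intro t
    have : A ∈ (t : Set (Closeds P)) := hAb t.1 t.2
    rwa [hUeq t] at this
  have hVex : ∀ t : ↥f, ∃ V : Opens P, WayBelow V ⟨U t, hUopen t⟩ ∧
      ((A : Set P) ∩ (V : Set P)).Nonempty := by
    intro t
    obtain ⟨x, hxA, hxU⟩ := hAmeet t
    obtain ⟨V, hV, hxV⟩ := exists_wayBelow_mem' hcc ⟨U t, hUopen t⟩ hxU
    exact ⟨V, hV, x, hxA, hxV⟩
  choose V hVwb hVA using hVex
  set 𝔉 : Set (Opens P) := {W | ∃ t : ↥f, WayBelow (V t) W} with h𝔉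
  have hacc : ∀ W ∈ 𝔉, ∀ 𝒮 : Set (Set P), (∀ U' ∈ 𝒮, IsOpen U') → (W : Set P) ⊆ ⋃₀ 𝒮 →
      ∃ F : Finset (Set P), ↑F ⊆ 𝒮 ∧ ∃ W' ∈ 𝔉, (W' : Set P) ⊆ ⋃₀ (F : Set (Set P)) := by
    rintro W ⟨t, hVW⟩ 𝒮 h𝒮op hWsub
    obtain ⟨V', hVV', hV'W⟩ := wayBelowInterpolation hcc hVW
    set d : Set (Opens P) := {Z | ∃ F : Finset (Set P), ↑F ⊆ 𝒮 ∧ (Z : Set P) = ⋃₀ (F : Set (Set P))}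
      with hd
    have hdne : d.Nonempty := ⟨⊥, ∅, by simp, by simp⟩
    have hddir : DirectedOn (· ≤ ·) d := by
      rintro Z1 ⟨F1, hF1, hZ1⟩ Z2 ⟨F2, hF2, hZ2⟩
      have hopZ : IsOpen (⋃₀ ((F1 ∪ F2 : Finset (Set P)) : Set (Set P))) := by
        refine isOpen_sUnion fun E hE => ?_
        rw [Finset.coe_union] at hE
        rcases hE with hE | hE
        · exact h𝒮op E (hF1 hE)
        · exact h𝒮op E (hF2 hE)
      refine ⟨⟨⋃₀ ((F1 ∪ F2 : Finset (Set P)) : Set (Set P)), hopZ⟩,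
        ⟨F1 ∪ F2, by rw [Finset.coe_union]; exact union_subset hF1 hF2, rfl⟩, ?_, ?_⟩
      · intro x hx
        rw [← SetLike.mem_coe, hZ1] at hx
        obtain ⟨E, hE, hxE⟩ := hx
        exact ⟨E, by rw [Finset.coe_union]; exact Or.inl hE, hxE⟩
      · intro x hx
        rw [← SetLike.mem_coe, hZ2] at hx
        obtain ⟨E, hE, hxE⟩ := hx
        exact ⟨E, by rw [Finset.coe_union]; exact Or.inr hE, hxE⟩
    have hlub : IsLUB d ⟨⋃₀ 𝒮, isOpen_sUnion h𝒮op⟩ := by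
      constructor
      · rintro Z ⟨F, hF, hZ⟩
        intro x hx
        rw [← SetLike.mem_coe, hZ] at hx
        obtain ⟨E, hE, hxE⟩ := hx
        exact ⟨E, hF hE, hxE⟩
      · intro u hu
        intro x hx
        obtain ⟨E, hE, hxE⟩ := hx
        have : (⟨E, h𝒮op E hE⟩ : Opens P) ∈ d := ⟨{E}, by simpa using hE, by simp⟩
        exact hu this hxE
    obtain ⟨Z, hZd, hV'Z⟩ := hV'W d hdne hddir _ hlub hWsub
    obtain ⟨F, hF, hZF⟩ := hZd
    refine ⟨F, hF, Z, ⟨t, wayBelowMonoRight hVV' hV'Z⟩, by rw [hZF]⟩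
  have hKcomp := Q_compact 𝔉 hacc
  refine ⟨{B : Closeds P | ∀ W ∈ 𝔉, ((B : Set P) ∩ (W : Set P)).Nonempty}, ?_, ?_, hKcomp⟩
  · rw [mem_nhds_iff]
    refine ⟨⋂ t : ↥f, dia ((V t : Opens P) : Set P), ?_, ?_, ?_⟩
    · intro B hB W hW
      obtain ⟨t, hVW⟩ := hW
      rw [mem_iInter] at hB
      obtain ⟨x, hxB, hxV⟩ := hB t
      exact ⟨x, hxB, wayBelowLe hVW hxV⟩
    · refine isOpen_iInter_of_finite fun t => ?_
      exact TopologicalSpace.GenerateOpen.basic _ ⟨((V t : Opens P) : Set P), (V t).isOpen, rfl⟩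
    · rw [mem_iInter]
      intro t
      obtain ⟨x, hxA, hxV⟩ := hVA t
      exact ⟨x, hxA, hxV⟩
  · intro B hB
    refine hOn (hbO ?_)
    intro t ht
    have hBU : ((B : Set P) ∩ U ⟨t, ht⟩).Nonempty := by
      refine hB ⟨U ⟨t, ht⟩, hUopen ⟨t, ht⟩⟩ ⟨⟨t, ht⟩, hVwb ⟨t, ht⟩⟩
    have hmem : B ∈ (((⟨t, ht⟩ : ↥f) : Set (Closeds P))) := by
      rw [hUeq ⟨t, ht⟩]; exact hBU
    exact hmem
lemma r_open {𝒰 : Set (Closeds P)} (hup : IsUpperSet 𝒰) (hin : DirSupInacc 𝒰) :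
    IsOpen {x : P | IicC x ∈ 𝒰} := by
  have h := slice_open hup hin ⊥
  have heq : {a : P | IicC a ⊔ ⊥ ∈ 𝒰} = {x : P | IicC x ∈ 𝒰} := by
    ext a; simp only [mem_setOf_eq, sup_bot_eq]
  rwa [heq] at h

lemma r_dia (Uo : Opens P) : {x : P | IicC x ∈ dia (Uo : Set P)} = (Uo : Set P) := by
  ext x
  constructor
  · rintro ⟨y, hyx, hyU⟩
    exact (isOpenP_iff.mp Uo.isOpen).1 hyx hyU
  · intro hx
    exact ⟨x, le_refl x, hx⟩

lemma coreCompact_P_of_gamma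
    (hcc : @CoreCompact (Closeds P) (Topology.scott (Closeds P) Set.univ)) : CoreCompact P := by
  letI τ : TopologicalSpace (Closeds P) := Topology.scott (Closeds P) Set.univ
  set diaO : Opens P → @Opens (Closeds P) τ :=
    (fun Uo => ⟨dia (Uo : Set P), dia_scottOpen Uo.isOpen⟩) with hdiaO
  have hdia_mono : Monotone diaO := by
    rintro U1 U2 h B ⟨x, hxB, hxU⟩
    exact ⟨x, hxB, h hxU⟩
  set rO : @Opens (Closeds P) τ → Opens P := (fun 𝒰 =>
    ⟨{x : P | IicC x ∈ (𝒰 : Set (Closeds P))},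
      r_open (isOpenG_iff.mp 𝒰.isOpen).1 (isOpenG_iff.mp 𝒰.isOpen).2⟩) with hrO
  have hr_mono : Monotone rO := fun 𝒰1 𝒰2 h x hx => h hx
  have hr_dia : ∀ Uo : Opens P, rO (diaO Uo) = Uo := by
    intro Uo
    apply Opens.ext
    exact r_dia Uo
  intro Vo
  have hmain := hcc (diaO Vo)
  refine continuousAt_of_directed_subset
    (T := rO '' {b : @Opens (Closeds P) τ | WayBelow b (diaO Vo)}) ?_
    (hmain.1.image rO) (directedOnImage hr_mono hmain.2.1) ?_
  · rintro _ ⟨b, hb, rfl⟩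
    intro d hdne hdir a ha hVa
    have hlubdia : IsLUB (diaO '' d) (diaO a) := by
      constructor
      · rintro _ ⟨z, hz, rfl⟩
        exact hdia_mono (ha.1 hz)
      · intro u hu
        rintro B ⟨x, hxB, hxa⟩
        have hxa' : x ∈ (sSup d : Opens P) := by rw [ha.sSup_eq]; exact hxa
        have : x ∈ (⋃ U ∈ d, (U : Set P)) := by rw [← Opens.coe_sSup]; exact hxa'
        rw [mem_iUnion₂] at this
        obtain ⟨U, hU, hxU⟩ := this
        exact hu (mem_image_of_mem _ hU) ⟨x, hxB, hxU⟩
    obtain ⟨_, ⟨z, hz, rfl⟩, hbz⟩ := hb (diaO '' d) (hdne.image _)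
      (directedOnImage hdia_mono hdir) _ hlubdia (hdia_mono hVa)
    refine ⟨z, hz, ?_⟩
    have := hr_mono hbz
    rwa [hr_dia z] at this
  · constructor
    · rintro _ ⟨b, hb, rfl⟩
      have := hr_mono (wayBelowLe hb)
      rwa [hr_dia Vo] at this
    · intro u hu
      intro x hx
      have hmem : IicC x ∈ (diaO Vo : Set (Closeds P)) := ⟨x, le_refl x, hx⟩
      have hsup : IicC x ∈ ((sSup {b : @Opens (Closeds P) τ | WayBelow b (diaO Vo)} :
          @Opens (Closeds P) τ) : Set (Closeds P)) := by
        rw [hmain.2.2.sSup_eq]; exact hmem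
      have : IicC x ∈ (⋃ b ∈ {b : @Opens (Closeds P) τ | WayBelow b (diaO Vo)},
          (b : Set (Closeds P))) := by rw [← Opens.coe_sSup]; exact hsup
      rw [mem_iUnion₂] at this
      obtain ⟨b, hb, hxb⟩ := this
      exact hu (mem_image_of_mem rO hb) hxb
end Main

end

/-- For a poset `P` the following are equivalent:
(1) `(P, σ(P))` is core-compact;
(2) `(Γ(P), σ(Γ(P)))` is core-compact;
(3) `(Γ(P), σ(Γ(P)))` is sober and locally compact;
(4) `(Γ(P), σ(Γ(P)))` is sober and locally compact and `σ(Γ(P)) = υ(Γ(P))`. -/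
theorem coreCompact_tfae
    {P : Type*} [PartialOrder P] [TopologicalSpace P] [Topology.IsScott P Set.univ] :
    (CoreCompact P ↔
      @CoreCompact (TopologicalSpace.Closeds P)
        (Topology.scott (TopologicalSpace.Closeds P) Set.univ)) ∧
    (@CoreCompact (TopologicalSpace.Closeds P)
        (Topology.scott (TopologicalSpace.Closeds P) Set.univ) ↔
      (@T0Space (TopologicalSpace.Closeds P)
          (Topology.scott (TopologicalSpace.Closeds P) Set.univ) ∧
        @QuasiSober (TopologicalSpace.Closeds P)
          (Topology.scott (TopologicalSpace.Closeds P) Set.univ) ∧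
        @LocallyCompactSpace (TopologicalSpace.Closeds P)
          (Topology.scott (TopologicalSpace.Closeds P) Set.univ))) ∧
    ((@T0Space (TopologicalSpace.Closeds P)
          (Topology.scott (TopologicalSpace.Closeds P) Set.univ) ∧
        @QuasiSober (TopologicalSpace.Closeds P)
          (Topology.scott (TopologicalSpace.Closeds P) Set.univ) ∧
        @LocallyCompactSpace (TopologicalSpace.Closeds P)
          (Topology.scott (TopologicalSpace.Closeds P) Set.univ)) ↔
      (@T0Space (TopologicalSpace.Closeds P)
          (Topology.scott (TopologicalSpace.Closeds P) Set.univ) ∧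
        @QuasiSober (TopologicalSpace.Closeds P)
          (Topology.scott (TopologicalSpace.Closeds P) Set.univ) ∧
        @LocallyCompactSpace (TopologicalSpace.Closeds P)
          (Topology.scott (TopologicalSpace.Closeds P) Set.univ) ∧
        Topology.scott (TopologicalSpace.Closeds P) Set.univ = lowerVietoris P)) := by
  have hT0 : @T0Space (Closeds P) (Topology.scott (Closeds P) Set.univ) := by
    letI := Topology.scott (Closeds P) Set.univ
    haveI : Topology.IsScott (Closeds P) Set.univ := ⟨rfl⟩
    infer_instance
  have i1 : CoreCompact P →
      @QuasiSober _ (Topology.scott (Closeds P) Set.univ) ∧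
      @LocallyCompactSpace _ (Topology.scott (Closeds P) Set.univ) ∧
      Topology.scott (Closeds P) Set.univ = lowerVietoris P := by
    intro hcc
    have he := scott_eq_lowerVietoris hcc
    refine ⟨?_, ?_, he⟩
    · rw [he]; exact vietoris_quasiSober
    · rw [he]; exact vietoris_locallyCompact hcc
  have i3 : @LocallyCompactSpace _ (Topology.scott (Closeds P) Set.univ) →
      @CoreCompact _ (Topology.scott (Closeds P) Set.univ) := fun h =>
    @coreCompact_of_locallyCompact _ (Topology.scott (Closeds P) Set.univ) h
  have i4 : @CoreCompact _ (Topology.scott (Closeds P) Set.univ) → CoreCompact P :=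
    coreCompact_P_of_gamma
  have c12 : CoreCompact P → @CoreCompact _ (Topology.scott (Closeds P) Set.univ) :=
    fun h => i3 (i1 h).2.1
  refine ⟨⟨c12, i4⟩, ⟨?_, ?_⟩, ⟨?_, ?_⟩⟩
  · intro h
    exact ⟨hT0, (i1 (i4 h)).1, (i1 (i4 h)).2.1⟩
  · rintro ⟨_, _, hLC⟩
    exact i3 hLC
  · rintro ⟨h0, hq, hl⟩
    exact ⟨h0, hq, hl, (i1 (i4 (i3 hl))).2.2⟩
  · rintro ⟨h0, hq, hl, _⟩
    exact ⟨h0, hq, hl⟩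
end
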